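/- Let A be an n×n Z-matrix. If A has an eigenvalue with nonpositive real part (in particular if A is not a nonsingular M-matrix with positive-real-part spectrum), then there is no vector x ≥ 0 with A x > 0 componentwise. -/

import Mathlib

open Finset

noncomputable def Complex.abs : AbsoluteValue ℂ ℝ := NormedField.toAbsoluteValue ℂ

@[simp] theorem Complex.abs_apply (z : ℂ) : Complex.abs z = ‖z‖ := rfl

theorem Complex.abs_ofReal (r : ℝ) : Complex.abs (r : ℂ) = |r| := by simp

theorem Complex.re_le_abs (z : ℂ) : z.re ≤ Complex.abs z := Complex.re_le_norm z

theorem stmt_5 {n : ℕ} (A : Matrix (Fin n) (Fin n) ℝ)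
    (hA : ∀ p q, p ≠ q → A p q ≤ 0)
    (hnp : ∃ μ ∈ spectrum ℂ (A.map Complex.ofReal), μ.re ≤ 0) :
    ¬ ∃ x : Fin n → ℝ, (∀ i, 0 ≤ x i) ∧ (∀ i, 0 < A.mulVec x i) := by
  rintro ⟨x, hx, hAx⟩
  obtain ⟨μ, hμ, hre⟩ := hnp
  -- x is strictly positive
  have hxpos : ∀ i, 0 < x i := by
    intro i
    rcases (hx i).lt_or_eq with h | h
    · exact h
    · exfalso
      have h1 : A.mulVec x i ≤ 0 := by
        rw [Matrix.mulVec, dotProduct]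
        apply Finset.sum_nonpos
        intro j _
        rcases eq_or_ne j i with rfl | hne
        · simp [← h]
        · exact mul_nonpos_of_nonpos_of_nonneg (hA i j (Ne.symm hne)) (hx j)
      exact absurd (hAx i) (not_lt.mpr h1)
  set A' := A.map (Complex.ofReal) with hA'def
  have hnu : ¬ IsUnit (μ • (1 : Matrix (Fin n) (Fin n) ℂ) - A') := by
    have := spectrum.mem_iff.mp hμ
    simpa [Algebra.algebraMap_eq_smul_one] using this
  have hdet : (μ • (1 : Matrix (Fin n) (Fin n) ℂ) - A').det = 0 := by
    by_contra hd
    exact hnu ((Matrix.isUnit_iff_isUnit_det _).mpr (isUnit_iff_ne_zero.mpr hd))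
  obtain ⟨v, hv0, hv⟩ := (Matrix.exists_mulVec_eq_zero_iff).mpr hdet
  have h0 : A'.mulVec v = μ • v := by
    have h := hv
    rw [Matrix.sub_mulVec, Matrix.smul_mulVec, Matrix.one_mulVec, sub_eq_zero] at h
    exact h.symm
  have heig : ∀ i, ∑ j, (A i j : ℂ) * v j = μ * v i := by
    intro i
    simpa [hA'def, Matrix.mulVec, dotProduct, Matrix.map_apply] using congrFun h0 i
  obtain ⟨k, hk⟩ : ∃ k, v k ≠ 0 := by
    by_contra h; push_neg at h; exact hv0 (funext h)
  obtain ⟨i, -, hi⟩ := Finset.exists_max_image Finset.univ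
    (fun j => Complex.abs (v j) / x j) ⟨k, mem_univ k⟩
  set m := Complex.abs (v i) / x i with hm
  have hmpos : 0 < m := lt_of_lt_of_le
    (div_pos (by simpa using hk) (hxpos k)) (hi k (mem_univ k))
  have hbound : ∀ j, Complex.abs (v j) ≤ m * x j := fun j =>
    (div_le_iff₀ (hxpos j)).mp (hi j (mem_univ j))
  have hvi : Complex.abs (v i) = m * x i := by
    rw [hm, div_mul_cancel₀ _ (hxpos i).ne']
  -- key inequality
  have hsum : (μ - (A i i : ℂ)) * v i = ∑ j ∈ univ.erase i, (A i j : ℂ) * v j := by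
    have := heig i
    rw [← Finset.add_sum_erase _ _ (mem_univ i)] at this
    linear_combination -this
  have hrow : ∑ j ∈ univ.erase i, (-(A i j)) * x j < A i i * x i := by
    have h2 : A.mulVec x i = A i i * x i + ∑ j ∈ univ.erase i, A i j * x j := by
      rw [Matrix.mulVec, dotProduct, ← Finset.add_sum_erase _ _ (mem_univ i)]
    have := hAx i
    rw [h2] at this
    have : -∑ j ∈ univ.erase i, A i j * x j < A i i * x i := by linarith
    simpa [Finset.sum_neg_distrib, neg_mul] using this
  have habs : Complex.abs (μ - (A i i : ℂ)) * (m * x i) ≤ m * ∑ j ∈ univ.erase i, (-(A i j)) * x j := by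
    calc Complex.abs (μ - (A i i : ℂ)) * (m * x i)
        = Complex.abs ((μ - (A i i : ℂ)) * v i) := by rw [map_mul, hvi]
      _ = Complex.abs (∑ j ∈ univ.erase i, (A i j : ℂ) * v j) := by rw [hsum]
      _ ≤ ∑ j ∈ univ.erase i, Complex.abs ((A i j : ℂ) * v j) := by
          exact AbsoluteValue.sum_le _ _ _
      _ ≤ ∑ j ∈ univ.erase i, (-(A i j)) * (m * x j) := by
          apply Finset.sum_le_sum
          intro j hj
          rw [map_mul, Complex.abs_ofReal,
            abs_of_nonpos (hA i j (Finset.ne_of_mem_erase hj).symm)]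
          exact mul_le_mul_of_nonneg_left (hbound j)
            (neg_nonneg.mpr (hA i j (Finset.ne_of_mem_erase hj).symm))
      _ = m * ∑ j ∈ univ.erase i, (-(A i j)) * x j := by
          rw [Finset.mul_sum]; apply Finset.sum_congr rfl; intros; ring
  have hlt : Complex.abs (μ - (A i i : ℂ)) < A i i := by
    have h3 : Complex.abs (μ - (A i i : ℂ)) * (m * x i) < m * (A i i * x i) :=
      habs.trans_lt (mul_lt_mul_of_pos_left hrow hmpos)
    have h4 : Complex.abs (μ - (A i i : ℂ)) * (m * x i) < A i i * (m * x i) := by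
      nlinarith
    exact lt_of_mul_lt_mul_right h4 (le_of_lt (mul_pos hmpos (hxpos i)))
  have h5 : (A i i : ℝ) - μ.re ≤ Complex.abs (μ - (A i i : ℂ)) := by
    have := Complex.re_le_abs ((A i i : ℂ) - μ)
    rw [Complex.sub_re, Complex.ofReal_re] at this
    rwa [← AbsoluteValue.map_sub] at this
  linarith
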